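/- arXiv:2212.10473 — 3 statements merged into one kernel-verified Lean document; each statement's English description precedes it below -/
import Mathlib

section
/- Let μ = λ be Lebesgue measure on [0,1] and let ν be the Borel probability measure on ℝ² equal to the half-sum of the uniform probability measures on the segments [0,1] × {−1} and [0,1] × {1}. Let h(x, y) = (x − y₁)² + 1 − y₂² for x ∈ ℝ, y = (y₁, y₂) ∈ ℝ². Then the infimum of ∫₀¹ h(x, T(x)) dx over all Borel measurable maps T : [0,1] → ℝ² with μ∘T⁻¹ ≼_c ν equals 0, and this infimum is not attained; in fact the maps T_n defined by T_n(x) = (2x − 2k/2ⁿ, 1) for x ∈ [2k/2ⁿ, (2k+1)/2ⁿ) and T_n(x) = (2x − (2k+2)/2ⁿ, −1) for x ∈ [(2k+1)/2ⁿ, (2k+2)/2ⁿ), k ∈ {0, …, 2^{n−1}−1}, satisfy μ∘T_n⁻¹ = ν and ∫₀¹ h(x, T_n(x)) dx ≤ 1/2ⁿ. -/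
open MeasureTheory ENNReal

noncomputable section

/-- Convex dominance (convex order) `ζ ≼_c η` for Borel measures on a normed space:
both measures have finite first moments and `∫ φ dζ ≤ ∫ φ dη` for every convex
function `φ` integrable with respect to `η`. -/
def ConvexDom {E : Type*} [NormedAddCommGroup E] [NormedSpace ℝ E] [MeasurableSpace E]
    (ζ η : Measure E) : Prop :=
  Integrable (fun u => ‖u‖) ζ ∧ Integrable (fun u => ‖u‖) η ∧
  ∀ φ : E → ℝ, ConvexOn ℝ Set.univ φ → Integrable φ η → ∫ u, φ u ∂ζ ≤ ∫ u, φ u ∂η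

/-- Lebesgue measure on `[0,1]`. -/
def μ01 : Measure ℝ := volume.restrict (Set.Icc 0 1)

/-- The half-sum of the uniform probability measures on the segments
`[0,1] × {−1}` and `[0,1] × {1}` in `ℝ²`. -/
def νseg : Measure (ℝ × ℝ) :=
  (2⁻¹ : ℝ≥0∞) • μ01.map (fun t => (t, -1)) + (2⁻¹ : ℝ≥0∞) • μ01.map (fun t => (t, 1))

/-- The cost function `h(x, y) = (x − y₁)² + 1 − y₂²`. -/
def hcost (x : ℝ) (y : ℝ × ℝ) : ℝ := (x - y.1) ^ 2 + 1 - y.2 ^ 2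

/-- The maps `T_n` : `T_n(x) = (2x − 2k/2ⁿ, 1)` for `x ∈ [2k/2ⁿ, (2k+1)/2ⁿ)` and
`T_n(x) = (2x − (2k+2)/2ⁿ, −1)` for `x ∈ [(2k+1)/2ⁿ, (2k+2)/2ⁿ)`. -/
def Tseq (n : ℕ) (x : ℝ) : ℝ × ℝ :=
  if Even ⌊x * 2 ^ n⌋ then (2 * x - (⌊x * 2 ^ n⌋ : ℝ) / 2 ^ n, 1)
  else (2 * x - ((⌊x * 2 ^ n⌋ : ℝ) + 1) / 2 ^ n, -1)

open Set Topology Filter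

lemma map_volume_affine (c : ℝ) :
    volume.map (fun x : ℝ => 2*x - c) = (2⁻¹ : ℝ≥0∞) • volume := by
  have h1 : (fun x : ℝ => 2*x - c) = (fun y : ℝ => y + (-c)) ∘ (fun x : ℝ => 2*x) := by
    funext x; simp [sub_eq_add_neg]
  rw [h1, ← Measure.map_map (by fun_prop) (by fun_prop)]
  have h2 : volume.map (fun x : ℝ => 2*x) = (2⁻¹ : ℝ≥0∞) • volume := by
    have := Real.map_volume_mul_left (a := 2) (by norm_num)
    rw [show (fun x : ℝ => 2*x) = (2 * ·) from rfl, this]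
    congr 1
    rw [show |(2:ℝ)⁻¹| = 2⁻¹ by norm_num]
    rw [ENNReal.ofReal_inv_of_pos (by norm_num : (0:ℝ) < 2), ENNReal.ofReal_ofNat]
  rw [h2, Measure.map_smul, map_add_right_eq_self volume (-c)]

lemma map_affine_restrict (c a b : ℝ) :
    (volume.restrict (Set.Ico a b)).map (fun x => 2*x - c) =
    (2⁻¹ : ℝ≥0∞) • volume.restrict (Set.Ico (2*a - c) (2*b - c)) := by
  have hf : Measurable fun x : ℝ => 2*x - c := by fun_prop
  have hpre : (fun x : ℝ => 2*x - c) ⁻¹' (Set.Ico (2*a-c) (2*b-c)) = Set.Ico a b := by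
    ext x; simp only [Set.mem_preimage, Set.mem_Ico]
    constructor <;> rintro ⟨h1, h2⟩ <;> constructor <;> linarith
  rw [← hpre, ← Measure.restrict_map hf measurableSet_Ico, map_volume_affine]
  rw [Measure.restrict_smul]

lemma sum_restrict_Ico (δ : ℝ) (hδ : 0 ≤ δ) (N : ℕ) :
    ∑ k ∈ Finset.range N, volume.restrict (Set.Ico ((k:ℝ)*δ) (((k:ℝ)+1)*δ)) =
      volume.restrict (Set.Ico 0 ((N:ℝ)*δ)) := by
  induction N with
  | zero => simp
  | succ N ih =>
    rw [Finset.sum_range_succ, ih,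
      ← Measure.restrict_union (Set.Ico_disjoint_Ico.2 (by simp)) measurableSet_Ico,
      Set.Ico_union_Ico_eq_Ico (by positivity) (by nlinarith), Nat.cast_succ]

lemma measurable_Tseq (n : ℕ) : Measurable (fun x : ℝ =>
  if Even ⌊x * 2 ^ n⌋ then (2 * x - (⌊x * 2 ^ n⌋ : ℝ) / 2 ^ n, (1:ℝ))
  else (2 * x - ((⌊x * 2 ^ n⌋ : ℝ) + 1) / 2 ^ n, -1)) := by
  have hfl : Measurable fun x : ℝ => ⌊x * 2 ^ n⌋ := Int.measurable_floor.comp (by fun_prop)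
  have hs : MeasurableSet {x : ℝ | Even ⌊x * 2 ^ n⌋} := hfl (MeasurableSet.of_discrete (s := {k : ℤ | Even k}))
  exact Measurable.ite hs (by fun_prop) (by fun_prop)


lemma pair_sum {M : Type*} [AddCommMonoid M] (f : ℕ → M) (m : ℕ) :
    ∑ j ∈ Finset.range (2*m), f j = ∑ k ∈ Finset.range m, (f (2*k) + f (2*k+1)) := by
  induction m with
  | zero => simp
  | succ m ih =>
    rw [Finset.sum_range_succ, ← ih, Nat.mul_succ, Finset.sum_range_succ, Finset.sum_range_succ]
    ring_nf
    rw [add_assoc]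

lemma map_sum_measure {α β : Type*} [MeasurableSpace α] [MeasurableSpace β]
    {f : α → β} (hf : Measurable f) (s : Finset ℕ) (μ : ℕ → Measure α) :
    (∑ j ∈ s, μ j).map f = ∑ j ∈ s, (μ j).map f := by
  ext t ht
  rw [Measure.map_apply hf ht, Measure.finset_sum_apply, Measure.finset_sum_apply]
  exact Finset.sum_congr rfl fun j _ => (Measure.map_apply hf ht).symm

lemma floor_on_piece (n j : ℕ) (x : ℝ) (hx : x ∈ Set.Ico ((j:ℝ)/2^n) (((j:ℝ)+1)/2^n)) :
    ⌊x * 2 ^ n⌋ = j := by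
  obtain ⟨h1, h2⟩ := hx
  have h2n : (0:ℝ) < 2^n := by positivity
  rw [Int.floor_eq_iff]
  constructor
  · push_cast
    rw [div_le_iff₀ h2n] at h1; linarith
  · push_cast
    rw [lt_div_iff₀ h2n] at h2; linarith

lemma sum_restrict_pow (n : ℕ) :
    ∑ j ∈ Finset.range (2^n), volume.restrict (Set.Ico ((j:ℝ)/2^n) (((j:ℝ)+1)/2^n)) =
      volume.restrict (Set.Ico 0 1) := by
  have h := sum_restrict_Ico ((2^n : ℝ)⁻¹) (by positivity) (2^n)
  have e1 : ∀ j : ℕ, ((j:ℝ)/2^n) = (j:ℝ) * (2^n:ℝ)⁻¹ := fun j => div_eq_mul_inv _ _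
  have e2 : ((2^n : ℕ) : ℝ) * (2^n:ℝ)⁻¹ = 1 := by
    push_cast; field_simp
  rw [e2] at h
  rw [← h]
  refine Finset.sum_congr rfl fun j _ => ?_
  rw [show ((j:ℝ)/2^n) = (j:ℝ) * (2^n:ℝ)⁻¹ from by ring,
    show (((j:ℝ)+1)/2^n) = ((j:ℝ)+1) * (2^n:ℝ)⁻¹ from by ring]

lemma piece_map (n j : ℕ) :
    (volume.restrict (Set.Ico ((j:ℝ)/2^n) (((j:ℝ)+1)/2^n))).map (Tseq n) =
      if Even j then
        ((2⁻¹:ℝ≥0∞) • volume.restrict (Set.Ico ((j:ℝ)/2^n) (((j:ℝ)+2)/2^n))).map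
          (fun y : ℝ => (y, (1:ℝ)))
      else
        ((2⁻¹:ℝ≥0∞) • volume.restrict (Set.Ico (((j:ℝ)-1)/2^n) (((j:ℝ)+1)/2^n))).map
          (fun y : ℝ => (y, (-1:ℝ))) := by
  set I := Set.Ico ((j:ℝ)/2^n) (((j:ℝ)+1)/2^n) with hI
  have hcongr : Tseq n =ᵐ[volume.restrict I]
      (fun x => if Even j then (2*x - (j:ℝ)/2^n, (1:ℝ)) else (2*x - ((j:ℝ)+1)/2^n, -1)) := by
    refine (ae_restrict_iff' measurableSet_Ico).2 (Filter.Eventually.of_forall fun x hx => ?_)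
    have hfl : ⌊x * 2 ^ n⌋ = j := floor_on_piece n j x hx
    simp only [Tseq, hfl, Int.even_coe_nat]
    split <;> simp
  rw [Measure.map_congr hcongr]
  by_cases hev : Even j
  · simp only [hev, if_true]
    have hcomp : (fun x : ℝ => (2*x - (j:ℝ)/2^n, (1:ℝ)))
        = (fun y : ℝ => (y, (1:ℝ))) ∘ (fun x : ℝ => 2*x - (j:ℝ)/2^n) := rfl
    rw [hcomp, ← Measure.map_map (by fun_prop) (by fun_prop), map_affine_restrict]
    congr 3 <;> ring
  · simp only [hev, if_false]
    have hcomp : (fun x : ℝ => (2*x - ((j:ℝ)+1)/2^n, (-1:ℝ)))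
        = (fun y : ℝ => (y, (-1:ℝ))) ∘ (fun x : ℝ => 2*x - ((j:ℝ)+1)/2^n) := rfl
    rw [hcomp, ← Measure.map_map (by fun_prop) (by fun_prop), map_affine_restrict]
    congr 3 <;> ring

theorem map_Tseq (n : ℕ) (hn : 1 ≤ n) : μ01.map (Tseq n) = νseg := by
  obtain ⟨m, rfl⟩ : ∃ m, n = m + 1 := ⟨n-1, (Nat.succ_pred_eq_of_pos hn).symm⟩
  have hmeas : Measurable (Tseq (m+1)) := measurable_Tseq (m+1)
  have hIcoIcc : volume.restrict (Set.Ico (0:ℝ) 1) = μ01 :=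
    Measure.restrict_congr_set Ico_ae_eq_Icc
  set P : ℕ → Measure (ℝ × ℝ) := fun j =>
    (volume.restrict (Set.Ico ((j:ℝ)/2^(m+1)) (((j:ℝ)+1)/2^(m+1)))).map (Tseq (m+1)) with hPdef
  set Q : ℕ → Set ℝ := fun k => Set.Ico ((k:ℝ)/2^m) (((k:ℝ)+1)/2^m) with hQdef
  have h2m : (0:ℝ) < 2^m := by positivity
  have hQeven : ∀ k : ℕ, Set.Ico (((2*k:ℕ):ℝ)/2^(m+1)) ((((2*k:ℕ):ℝ)+2)/2^(m+1)) = Q k := by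
    intro k
    have e1 : ((2*k:ℕ):ℝ)/2^(m+1) = (k:ℝ)/2^m := by push_cast; rw [pow_succ]; field_simp
    have e2 : (((2*k:ℕ):ℝ)+2)/2^(m+1) = ((k:ℝ)+1)/2^m := by
      push_cast; rw [pow_succ]; field_simp
    rw [e1, e2]
  have hQodd : ∀ k : ℕ,
      Set.Ico ((((2*k+1:ℕ):ℝ)-1)/2^(m+1)) ((((2*k+1:ℕ):ℝ)+1)/2^(m+1)) = Q k := by
    intro k
    have e1 : (((2*k+1:ℕ):ℝ)-1)/2^(m+1) = (k:ℝ)/2^m := by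
      push_cast; rw [pow_succ]; field_simp; ring
    have e2 : (((2*k+1:ℕ):ℝ)+1)/2^(m+1) = ((k:ℝ)+1)/2^m := by
      push_cast; rw [pow_succ]; field_simp; ring
    rw [e1, e2]
  have hP : ∀ k : ℕ, P (2*k) + P (2*k+1) =
      ((2⁻¹:ℝ≥0∞) • volume.restrict (Q k)).map (fun y : ℝ => (y, (1:ℝ))) +
      ((2⁻¹:ℝ≥0∞) • volume.restrict (Q k)).map (fun y : ℝ => (y, (-1:ℝ))) := by
    intro k
    have h1 := piece_map (m+1) (2*k)
    have h2 := piece_map (m+1) (2*k+1)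
    rw [if_pos (even_two_mul k)] at h1
    rw [if_neg (by simp [Nat.even_add_one, parity_simps])] at h2
    rw [hPdef]
    simp only
    rw [h1, h2, hQeven, hQodd]
  calc μ01.map (Tseq (m+1))
      = (∑ j ∈ Finset.range (2^(m+1)), volume.restrict
          (Set.Ico ((j:ℝ)/2^(m+1)) (((j:ℝ)+1)/2^(m+1)))).map (Tseq (m+1)) := by
        rw [sum_restrict_pow (m+1), hIcoIcc]
    _ = ∑ j ∈ Finset.range (2^(m+1)), P j := map_sum_measure hmeas _ _
    _ = ∑ k ∈ Finset.range (2^m), (P (2*k) + P (2*k+1)) := by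
        rw [← pair_sum P (2^m)]
        congr 1
        rw [pow_succ, mul_comm]
    _ = ∑ k ∈ Finset.range (2^m),
          (((2⁻¹:ℝ≥0∞) • volume.restrict (Q k)).map (fun y : ℝ => (y, (1:ℝ))) +
           ((2⁻¹:ℝ≥0∞) • volume.restrict (Q k)).map (fun y : ℝ => (y, (-1:ℝ)))) :=
        Finset.sum_congr rfl fun k _ => hP k
    _ = (∑ k ∈ Finset.range (2^m), (2⁻¹:ℝ≥0∞) • volume.restrict (Q k)).map
          (fun y : ℝ => (y, (1:ℝ))) +
        (∑ k ∈ Finset.range (2^m), (2⁻¹:ℝ≥0∞) • volume.restrict (Q k)).map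
          (fun y : ℝ => (y, (-1:ℝ))) := by
        rw [Finset.sum_add_distrib, map_sum_measure (by fun_prop), map_sum_measure (by fun_prop)]
    _ = νseg := by
        rw [← Finset.smul_sum, sum_restrict_pow m, hIcoIcc, Measure.map_smul, Measure.map_smul]
        rw [νseg]
        exact add_comm _ _

lemma mu01_univ : μ01 Set.univ = 1 := by
  rw [μ01, Measure.restrict_apply_univ, Real.volume_Icc]
  norm_num

instance : IsFiniteMeasure μ01 := by
  constructor; rw [mu01_univ]; exact one_lt_top

lemma cost_Tseq (n : ℕ) (hn : 1 ≤ n) : ∫ x, hcost x (Tseq n x) ∂μ01 ≤ 1 / 2^n := by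
  have h2n : (0:ℝ) < 2^n := by positivity
  have hbd : ∀ x : ℝ, ‖hcost x (Tseq n x)‖ ≤ (2^n:ℝ)⁻¹ * (2^n:ℝ)⁻¹ := by
    intro x
    have hfl1 : (⌊x * 2^n⌋ : ℝ) ≤ x * 2^n := Int.floor_le _
    have hfl2 : x * 2^n < (⌊x * 2^n⌋ : ℝ) + 1 := Int.lt_floor_add_one _
    set F : ℝ := (⌊x * 2^n⌋ : ℝ) with hF
    have hle : F/2^n ≤ x := (div_le_iff₀ h2n).2 hfl1
    have hr : (F+1)/2^n = F/2^n + (2^n)⁻¹ := by ring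
    have hlt : x < F/2^n + (2^n)⁻¹ := by
      have := (lt_div_iff₀ h2n).2 hfl2
      linarith
    have key : ∃ d : ℝ, hcost x (Tseq n x) = d^2 ∧ |d| ≤ (2^n:ℝ)⁻¹ := by
      unfold Tseq hcost
      split
      · refine ⟨x - (2 * x - (⌊x * 2 ^ n⌋ : ℝ) / 2 ^ n), by norm_num, ?_⟩
        rw [abs_le]
        refine ⟨by linarith, by linarith⟩
      · refine ⟨x - (2 * x - ((⌊x * 2 ^ n⌋ : ℝ) + 1) / 2 ^ n), by norm_num, ?_⟩
        rw [abs_le]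
        refine ⟨by linarith, by linarith⟩
    obtain ⟨d, hd, hda⟩ := key
    rw [hd, Real.norm_eq_abs, abs_of_nonneg (sq_nonneg d), sq]
    have := abs_nonneg d
    nlinarith [abs_mul_abs_self d]
  have h := norm_integral_le_of_norm_le_const (μ := μ01)
    (f := fun x => hcost x (Tseq n x)) (C := (2^n:ℝ)⁻¹ * (2^n:ℝ)⁻¹)
    (Filter.Eventually.of_forall hbd)
  rw [measureReal_def, mu01_univ] at h
  simp only [ENNReal.toReal_one, mul_one, Real.norm_eq_abs] at h
  have h2 : ∫ x, hcost x (Tseq n x) ∂μ01 ≤ (2^n:ℝ)⁻¹ * (2^n:ℝ)⁻¹ :=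
    le_trans (le_abs_self _) h
  have h3 : (2^n:ℝ)⁻¹ ≤ 1 := by
    rw [inv_le_one_iff₀]; right; exact one_le_pow₀ (by norm_num)
  calc ∫ x, hcost x (Tseq n x) ∂μ01 ≤ (2^n:ℝ)⁻¹ * (2^n:ℝ)⁻¹ := h2
    _ ≤ 1 * (2^n:ℝ)⁻¹ := by nlinarith [inv_pos.2 h2n]
    _ = 1 / 2^n := by ring

lemma convexOn_affine_max (a b c : ℝ) :
    ConvexOn ℝ Set.univ (fun y : ℝ × ℝ => max (a*y.1 + b*y.2 + c) 0) := by
  have h1 : ConvexOn ℝ Set.univ (fun y : ℝ × ℝ => a*y.1 + b*y.2 + c) := by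
    refine ⟨convex_univ, fun x _ y _ p q hp hq hpq => ?_⟩
    simp only [Prod.smul_fst, Prod.smul_snd, Prod.fst_add, Prod.snd_add, smul_eq_mul]
    exact le_of_eq (by linear_combination (-c) * hpq)
  have h2 : ConvexOn ℝ Set.univ (fun _ : ℝ × ℝ => (0:ℝ)) := convexOn_const 0 convex_univ
  exact h1.sup h2

lemma integrable_slice {φ : ℝ × ℝ → ℝ} (hφ : Continuous φ) (e : ℝ) :
    Integrable (fun t => φ (t, e)) μ01 :=
  (hφ.comp (by fun_prop)).integrableOn_Icc

lemma integrable_nuseg {φ : ℝ × ℝ → ℝ} (hφ : Continuous φ) : Integrable φ νseg := by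
  rw [νseg]
  refine (integrable_add_measure).2 ⟨?_, ?_⟩ <;>
  · refine Integrable.smul_measure ?_ (by norm_num)
    refine (integrable_map_measure hφ.aestronglyMeasurable (by fun_prop)).2 ?_
    exact integrable_slice hφ _

lemma integral_nuseg {φ : ℝ × ℝ → ℝ} (hφ : Continuous φ) :
    ∫ y, φ y ∂νseg = 2⁻¹ * ∫ x, φ (x,-1) ∂μ01 + 2⁻¹ * ∫ x, φ (x,1) ∂μ01 := by
  rw [νseg]
  rw [integral_add_measure
    (((integrable_map_measure hφ.aestronglyMeasurable (by fun_prop)).2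
        (integrable_slice hφ _)).smul_measure (by norm_num))
    (((integrable_map_measure hφ.aestronglyMeasurable (by fun_prop)).2
        (integrable_slice hφ _)).smul_measure (by norm_num)),
    integral_smul_measure, integral_smul_measure,
    integral_map (by fun_prop) hφ.aestronglyMeasurable,
    integral_map (by fun_prop) hφ.aestronglyMeasurable]
  norm_num

lemma mu01_ae_mem : ∀ᵐ x ∂μ01, x ∈ Set.Icc (0:ℝ) 1 := by
  rw [μ01]; exact ae_restrict_mem measurableSet_Icc

section Part1
variable {T : ℝ → ℝ × ℝ} (hT : Measurable T) (hCD : ConvexDom (μ01.map T) νseg)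
include hT hCD

lemma hmain : ∀ φ : ℝ × ℝ → ℝ, Continuous φ → ConvexOn ℝ Set.univ φ →
    ∫ x, φ (T x) ∂μ01 ≤ 2⁻¹ * ∫ x, φ (x,-1) ∂μ01 + 2⁻¹ * ∫ x, φ (x,1) ∂μ01 := by
  intro φ hc hconv
  have := hCD.2.2 φ hconv (integrable_nuseg hc)
  rwa [integral_map hT.aemeasurable hc.aestronglyMeasurable, integral_nuseg hc] at this

lemma hnormT : Integrable (fun x => ‖T x‖) μ01 := by
  have := hCD.1
  exact (integrable_map_measure (by fun_prop) hT.aemeasurable).1 this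

lemma hbound (a b c : ℝ) (h1 : ∀ t ∈ Set.Icc (0:ℝ) 1, a*t + b*(-1) + c ≤ 0)
    (h2 : ∀ t ∈ Set.Icc (0:ℝ) 1, a*t + b*1 + c ≤ 0) :
    ∀ᵐ x ∂μ01, a * (T x).1 + b * (T x).2 + c ≤ 0 := by
  set φ : ℝ × ℝ → ℝ := fun y => max (a*y.1 + b*y.2 + c) 0 with hφ
  have hc : Continuous φ := by fun_prop
  have hν1 : ∫ x, φ (x,-1) ∂μ01 = 0 := by
    rw [← integral_zero ℝ ℝ (μ := μ01)]
    refine integral_congr_ae ?_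
    filter_upwards [mu01_ae_mem] with x hx
    simp only [hφ]
    exact max_eq_right (h1 x hx)
  have hν2 : ∫ x, φ (x,1) ∂μ01 = 0 := by
    rw [← integral_zero ℝ ℝ (μ := μ01)]
    refine integral_congr_ae ?_
    filter_upwards [mu01_ae_mem] with x hx
    simp only [hφ]
    exact max_eq_right (h2 x hx)
  have hup := hmain hT hCD φ hc (convexOn_affine_max a b c)
  rw [hν1, hν2] at hup
  simp only [mul_zero, add_zero] at hup
  have hint : Integrable (fun x => φ (T x)) μ01 := by
    refine Integrable.mono' (((hnormT hT hCD).const_mul (|a|+|b|)).add (integrable_const |c|))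
      ((hc.measurable.comp hT).aestronglyMeasurable) (Filter.Eventually.of_forall fun x => ?_)
    show ‖φ (T x)‖ ≤ (|a|+|b|) * ‖T x‖ + |c|
    have hf1 : |(T x).1| ≤ ‖T x‖ := norm_fst_le (T x)
    have hf2 : |(T x).2| ≤ ‖T x‖ := norm_snd_le (T x)
    have habs : |a * (T x).1 + b * (T x).2 + c| ≤ (|a|+|b|) * ‖T x‖ + |c| := by
      calc |a * (T x).1 + b * (T x).2 + c| ≤ |a * (T x).1| + |b * (T x).2| + |c| := by
            exact (abs_add_le _ _).trans (by gcongr; exact abs_add_le _ _)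
        _ ≤ (|a|+|b|) * ‖T x‖ + |c| := by
            rw [abs_mul, abs_mul]
            have := abs_nonneg a; have := abs_nonneg b
            nlinarith
    rw [Real.norm_eq_abs, abs_of_nonneg (le_max_right _ _)]
    simp only [hφ]
    rcases max_cases (a * (T x).1 + b * (T x).2 + c) 0 with ⟨he, _⟩ | ⟨he, _⟩ <;> rw [he]
    · exact (le_abs_self _).trans habs
    · have h0 : (0:ℝ) ≤ |c| := abs_nonneg c
      have h1 : (0:ℝ) ≤ (|a|+|b|) * ‖T x‖ :=
        mul_nonneg (by positivity) (norm_nonneg _)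
      linarith
  have h0 : ∫ x, φ (T x) ∂μ01 = 0 :=
    le_antisymm hup (integral_nonneg fun x => le_max_right _ _)
  have hz := (integral_eq_zero_iff_of_nonneg (fun x => le_max_right _ _) hint).1 h0
  filter_upwards [hz] with x hx
  have : a * (T x).1 + b * (T x).2 + c ≤ max (a * (T x).1 + b * (T x).2 + c) 0 := le_max_left _ _
  calc a * (T x).1 + b * (T x).2 + c ≤ φ (T x) := this
    _ = 0 := hx

lemma part1 : 0 < ∫ x, hcost x (T x) ∂μ01 := by
  by_contra hlt
  push_neg at hlt
  have hb1 : ∀ᵐ x ∂μ01, (T x).1 ≤ 1 := by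
    filter_upwards [hbound hT hCD 1 0 (-1)
      (fun t ht => by simp only [mul_neg, mul_zero]; linarith [ht.2])
      (fun t ht => by simp only [mul_one, mul_zero]; linarith [ht.2])] with x hx
    linarith [hx]
  have hb2 : ∀ᵐ x ∂μ01, 0 ≤ (T x).1 := by
    filter_upwards [hbound hT hCD (-1) 0 0
      (fun t ht => by simp only [mul_neg, mul_zero]; linarith [ht.1])
      (fun t ht => by simp only [mul_one, mul_zero]; linarith [ht.1])] with x hx
    linarith [hx]
  have hb3 : ∀ᵐ x ∂μ01, (T x).2 ≤ 1 := by
    filter_upwards [hbound hT hCD 0 1 (-1)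
      (fun t ht => by norm_num) (fun t ht => by norm_num)] with x hx
    linarith [hx]
  have hb4 : ∀ᵐ x ∂μ01, -1 ≤ (T x).2 := by
    filter_upwards [hbound hT hCD 0 (-1) (-1)
      (fun t ht => by norm_num) (fun t ht => by norm_num)] with x hx
    linarith [hx]
  have hT1m : Measurable fun x => (T x).1 := measurable_fst.comp hT
  have hT2m : Measurable fun x => (T x).2 := measurable_snd.comp hT
  have hsqm : Measurable fun x : ℝ => (x - (T x).1)^2 := (measurable_id.sub hT1m).pow_const 2
  have hqm : Measurable fun x : ℝ => 1 - (T x).2^2 := measurable_const.sub (hT2m.pow_const 2)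
  have hsq_int : Integrable (fun x => (x - (T x).1)^2) μ01 := by
    refine Integrable.mono' (integrable_const (4:ℝ))
      hsqm.aestronglyMeasurable ?_
    filter_upwards [mu01_ae_mem, hb1, hb2] with x hx h1 h2
    rw [Real.norm_eq_abs, abs_of_nonneg (sq_nonneg _)]
    obtain ⟨hx0, hx1⟩ := hx
    nlinarith
  have hqf_int : Integrable (fun x => 1 - (T x).2^2) μ01 := by
    refine Integrable.mono' (integrable_const (2:ℝ))
      hqm.aestronglyMeasurable ?_
    filter_upwards [hb3, hb4] with x h3 h4
    rw [Real.norm_eq_abs, abs_le]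
    constructor <;> nlinarith
  have hqf_nonneg : ∀ᵐ x ∂μ01, 0 ≤ 1 - (T x).2^2 := by
    filter_upwards [hb3, hb4] with x h3 h4
    nlinarith
  have hsplit : ∫ x, hcost x (T x) ∂μ01
      = (∫ x, (x - (T x).1)^2 ∂μ01) + ∫ x, (1 - (T x).2^2) ∂μ01 := by
    rw [← integral_add hsq_int hqf_int]
    refine integral_congr_ae (Filter.Eventually.of_forall fun x => ?_)
    simp only [hcost]
    ring
  have h1 : 0 ≤ ∫ x, (x - (T x).1)^2 ∂μ01 := integral_nonneg fun x => sq_nonneg _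
  have h2 : 0 ≤ ∫ x, (1 - (T x).2^2) ∂μ01 := integral_nonneg_of_ae hqf_nonneg
  have hsq0 : ∫ x, (x - (T x).1)^2 ∂μ01 = 0 := by rw [hsplit] at hlt; linarith
  have hqf0 : ∫ x, (1 - (T x).2^2) ∂μ01 = 0 := by rw [hsplit] at hlt; linarith
  have hT1 : ∀ᵐ x ∂μ01, (T x).1 = x := by
    have := (integral_eq_zero_iff_of_nonneg (fun x => sq_nonneg _) hsq_int).1 hsq0
    filter_upwards [this] with x hx
    have : (x - (T x).1)^2 = 0 := hx
    have := pow_eq_zero_iff (n := 2) (by norm_num) |>.1 this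
    linarith [sub_eq_zero.1 this]
  have hT2 : ∀ᵐ x ∂μ01, (T x).2 = 1 ∨ (T x).2 = -1 := by
    have := (integral_eq_zero_iff_of_nonneg_ae hqf_nonneg hqf_int).1 hqf0
    filter_upwards [this] with x hx
    have hx' : 1 - (T x).2^2 = 0 := hx
    have : ((T x).2 - 1) * ((T x).2 + 1) = 0 := by nlinarith
    rcases mul_eq_zero.1 this with h | h
    · left; linarith
    · right; linarith

  -- the set A where the second coordinate is 1
  set A : Set ℝ := Set.Icc 0 1 ∩ (fun x => (T x).2) ⁻¹' {1} with hAdef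
  have hAm : MeasurableSet A := measurableSet_Icc.inter (hT2m (measurableSet_singleton 1))
  have hAsub : A ⊆ Set.Icc 0 1 := Set.inter_subset_left
  have hBm : MeasurableSet (Set.Icc (0:ℝ) 1 \ A) := measurableSet_Icc.diff hAm
  have hμ01A : μ01.restrict A = volume.restrict A := by
    rw [μ01, Measure.restrict_restrict hAm, Set.inter_eq_left.2 hAsub]
  have hμ01B : μ01.restrict (Set.Icc (0:ℝ) 1 \ A) = volume.restrict (Set.Icc (0:ℝ) 1 \ A) := by
    rw [μ01, Measure.restrict_restrict hBm, Set.inter_eq_left.2 Set.diff_subset]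
  have hcont : ∀ a : ℝ, Continuous fun x : ℝ => max (x-a) 0 :=
    fun a => (continuous_id.sub continuous_const).max continuous_const
  have hJint : ∀ a : ℝ, Integrable (fun x => max (x-a) 0) μ01 :=
    fun a => (hcont a).integrableOn_Icc
  have hIAint : ∀ a : ℝ, Integrable (fun x => max (x-a) 0) (volume.restrict A) :=
    fun a => (hcont a).integrableOn_Icc.mono_set hAsub
  have hIBint : ∀ a : ℝ,
      Integrable (fun x => max (x-a) 0) (volume.restrict (Set.Icc (0:ℝ) 1 \ A)) :=
    fun a => (hcont a).integrableOn_Icc.mono_set Set.diff_subset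
  have hsumJ : ∀ a : ℝ, (∫ x in A, max (x-a) 0 ∂volume)
      + (∫ x in Set.Icc (0:ℝ) 1 \ A, max (x-a) 0 ∂volume) = ∫ x, max (x-a) 0 ∂μ01 := by
    intro a
    have := setIntegral_union
      (disjoint_sdiff_self_right : Disjoint A (Set.Icc (0:ℝ) 1 \ A))
      hBm (hIAint a) (hIBint a)
    rw [Set.union_diff_cancel hAsub] at this
    rw [← this]
    rfl
  have hIAeq : ∀ a : ℝ, -3 ≤ a →
      (∫ x in A, max (x-a) 0 ∂volume) = 2⁻¹ * ∫ x, max (x-a) 0 ∂μ01 := by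
    intro a ha
    set φp : ℝ × ℝ → ℝ := fun y => max (1*y.1 + 2*y.2 + (-(a+2))) 0 with hφp
    set φm : ℝ × ℝ → ℝ := fun y => max (1*y.1 + (-2)*y.2 + (-(a+2))) 0 with hφm
    have hp := hmain hT hCD φp (by fun_prop) (convexOn_affine_max 1 2 (-(a+2)))
    have hm := hmain hT hCD φm (by fun_prop) (convexOn_affine_max 1 (-2) (-(a+2)))
    have hp1 : ∫ x, φp (x,-1) ∂μ01 = 0 := by
      rw [← integral_zero ℝ ℝ (μ := μ01)]
      refine integral_congr_ae ?_
      filter_upwards [mu01_ae_mem] with x hx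
      exact max_eq_right (by obtain ⟨_, h⟩ := hx; simp only; linarith)
    have hp2 : ∫ x, φp (x,1) ∂μ01 = ∫ x, max (x-a) 0 ∂μ01 := by
      refine integral_congr_ae (Filter.Eventually.of_forall fun x => ?_)
      show max (1*x + 2*1 + (-(a+2))) 0 = max (x-a) 0
      rw [show 1*x + 2*1 + (-(a+2)) = x - a by ring]
    have hm2 : ∫ x, φm (x,1) ∂μ01 = 0 := by
      rw [← integral_zero ℝ ℝ (μ := μ01)]
      refine integral_congr_ae ?_
      filter_upwards [mu01_ae_mem] with x hx
      exact max_eq_right (by obtain ⟨_, h⟩ := hx; simp only; linarith)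
    have hm1 : ∫ x, φm (x,-1) ∂μ01 = ∫ x, max (x-a) 0 ∂μ01 := by
      refine integral_congr_ae (Filter.Eventually.of_forall fun x => ?_)
      show max (1*x + (-2)*(-1) + (-(a+2))) 0 = max (x-a) 0
      rw [show 1*x + (-2)*(-1) + (-(a+2)) = x - a by ring]
    have hpl : ∫ x, φp (T x) ∂μ01 = ∫ x in A, max (x-a) 0 ∂volume := by
      have e : ∫ x, φp (T x) ∂μ01 = ∫ x, A.indicator (fun x => max (x-a) 0) x ∂μ01 := by
        refine integral_congr_ae ?_
        filter_upwards [hT1, hT2, mu01_ae_mem] with x e1 e2 hx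
        rcases e2 with e2 | e2
        · have hxA : x ∈ A := ⟨hx, by simp [e2]⟩
          rw [Set.indicator_of_mem hxA]
          show max (1*(T x).1 + 2*(T x).2 + (-(a+2))) 0 = max (x-a) 0
          rw [e1, e2, show 1*x + 2*1 + (-(a+2)) = x - a by ring]
        · have hxA : x ∉ A := by
            intro h
            have h1 : (T x).2 = 1 := h.2
            rw [e2] at h1; norm_num at h1
          rw [Set.indicator_of_notMem hxA]
          show max (1*(T x).1 + 2*(T x).2 + (-(a+2))) 0 = 0
          rw [e1, e2]
          exact max_eq_right (by obtain ⟨_, h⟩ := hx; linarith)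
      rw [e, integral_indicator hAm, hμ01A]
    have hml : ∫ x, φm (T x) ∂μ01 = ∫ x in Set.Icc (0:ℝ) 1 \ A, max (x-a) 0 ∂volume := by
      have e : ∫ x, φm (T x) ∂μ01
          = ∫ x, (Set.Icc (0:ℝ) 1 \ A).indicator (fun x => max (x-a) 0) x ∂μ01 := by
        refine integral_congr_ae ?_
        filter_upwards [hT1, hT2, mu01_ae_mem] with x e1 e2 hx
        rcases e2 with e2 | e2
        · have hxA : x ∉ Set.Icc (0:ℝ) 1 \ A := by
            intro h
            exact h.2 ⟨hx, by simp [e2]⟩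
          rw [Set.indicator_of_notMem hxA]
          show max (1*(T x).1 + (-2)*(T x).2 + (-(a+2))) 0 = 0
          rw [e1, e2]
          exact max_eq_right (by obtain ⟨_, h⟩ := hx; linarith)
        · have hxA : x ∈ Set.Icc (0:ℝ) 1 \ A := by
            refine ⟨hx, ?_⟩
            intro h
            have h1 : (T x).2 = 1 := h.2
            rw [e2] at h1; norm_num at h1
          rw [Set.indicator_of_mem hxA]
          show max (1*(T x).1 + (-2)*(T x).2 + (-(a+2))) 0 = max (x-a) 0
          rw [e1, e2, show 1*x + (-2)*(-1) + (-(a+2)) = x - a by ring]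
      rw [e, integral_indicator hBm, hμ01B]
    rw [hpl, hp1, hp2] at hp
    rw [hml, hm1, hm2] at hm
    have := hsumJ a
    linarith

  haveI hAfin : IsFiniteMeasure (volume.restrict A) := by
    constructor
    rw [Measure.restrict_apply_univ]
    exact lt_of_le_of_lt (measure_mono hAsub) (by rw [Real.volume_Icc]; norm_num)
  have hkey : ∀ u : ℝ, -3 ≤ u →
      volume (A ∩ Set.Ioi u) = 2⁻¹ * volume (Set.Icc (0:ℝ) 1 ∩ Set.Ioi u) := by
    intro u hu
    set f : ℕ → ℝ → ℝ := fun n x =>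
      ((n:ℝ)+1) * (max (x-u) 0 - max (x - (u + ((n:ℝ)+1)⁻¹)) 0) with hfd
    have hfcont : ∀ n, Continuous (f n) := by
      intro n
      exact continuous_const.mul ((hcont u).sub (hcont (u + ((n:ℝ)+1)⁻¹)))
    have hinvpos : ∀ n : ℕ, (0:ℝ) < ((n:ℝ)+1)⁻¹ := fun n => by positivity
    have hfbd : ∀ (n : ℕ) (x : ℝ), ‖f n x‖ ≤ 1 := by
      intro n x
      have hn : (0:ℝ) < (n:ℝ)+1 := by positivity
      have e1 : max (x - (u + ((n:ℝ)+1)⁻¹)) 0 ≤ max (x-u) 0 :=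
        max_le_max (by linarith [(hinvpos n).le]) le_rfl
      have e2 : max (x-u) 0 ≤ max (x - (u + ((n:ℝ)+1)⁻¹)) 0 + ((n:ℝ)+1)⁻¹ := by
        rcases max_cases (x-u) 0 with ⟨h,_⟩|⟨h,_⟩ <;> rw [h]
        · have : x - u = (x - (u + ((n:ℝ)+1)⁻¹)) + ((n:ℝ)+1)⁻¹ := by ring
          rw [this]
          exact add_le_add (le_max_left _ _) le_rfl
        · exact add_nonneg (le_max_right _ _) (hinvpos n).le
      rw [Real.norm_eq_abs, abs_le]
      constructor
      · have : 0 ≤ f n x := mul_nonneg hn.le (by linarith)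
        linarith
      · have hd : max (x-u) 0 - max (x - (u + ((n:ℝ)+1)⁻¹)) 0 ≤ ((n:ℝ)+1)⁻¹ := by linarith
        calc f n x ≤ ((n:ℝ)+1) * ((n:ℝ)+1)⁻¹ := mul_le_mul_of_nonneg_left hd hn.le
          _ = 1 := mul_inv_cancel₀ hn.ne'
    have hflim : ∀ x : ℝ, Filter.Tendsto (fun n => f n x) Filter.atTop
        (𝓝 ((Set.Ioi u).indicator (fun _ => (1:ℝ)) x)) := by
      intro x
      rcases le_or_gt x u with hx | hx
      · have hz : ∀ n : ℕ, f n x = 0 := by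
          intro n
          have h1 : max (x-u) 0 = 0 := max_eq_right (by linarith)
          have h2 : max (x - (u + ((n:ℝ)+1)⁻¹)) 0 = 0 :=
            max_eq_right (by linarith [(hinvpos n).le])
          simp [hfd, h1, h2]
        rw [Set.indicator_of_notMem (by simpa using hx)]
        exact Filter.Tendsto.congr (fun n => (hz n).symm) tendsto_const_nhds
      · rw [Set.indicator_of_mem (by simpa using hx)]
        have hxu : (0:ℝ) < x - u := by linarith
        obtain ⟨N, hN⟩ := exists_nat_gt (x - u)⁻¹
        refine Filter.Tendsto.congr' ?_ tendsto_const_nhds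
        rw [Filter.EventuallyEq, Filter.eventually_atTop]
        refine ⟨N, fun n hn => ?_⟩
        have hn1 : ((n:ℝ)+1)⁻¹ < x - u := by
          have hlt : (x-u)⁻¹ < (n:ℝ)+1 := by
            calc (x-u)⁻¹ < (N:ℝ) := hN
              _ ≤ (n:ℝ) := by exact_mod_cast hn
              _ < (n:ℝ)+1 := by linarith
          have h2 := mul_lt_mul_of_pos_left hlt hxu
          rw [mul_inv_cancel₀ hxu.ne'] at h2
          have h3 := mul_lt_mul_of_pos_left h2 (hinvpos n)
          rw [mul_one] at h3
          have h4 : ((n:ℝ)+1)⁻¹ * ((x-u)*((n:ℝ)+1)) = x - u := by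
            field_simp
          rw [h4] at h3
          exact h3
        have h1 : max (x-u) 0 = x - u := max_eq_left (by linarith)
        have h2 : max (x - (u + ((n:ℝ)+1)⁻¹)) 0 = x - (u + ((n:ℝ)+1)⁻¹) :=
          max_eq_left (by linarith)
        symm
        show f n x = 1
        rw [hfd]
        simp only
        rw [h1, h2, show (x - u) - (x - (u + ((n:ℝ)+1)⁻¹)) = ((n:ℝ)+1)⁻¹ by ring]
        exact mul_inv_cancel₀ (by positivity)
    have hDA : Filter.Tendsto (fun n => ∫ x in A, f n x ∂volume) Filter.atTop
        (𝓝 (∫ x in A, (Set.Ioi u).indicator (fun _ => (1:ℝ)) x ∂volume)) := by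
      refine tendsto_integral_of_dominated_convergence (fun _ => (1:ℝ))
        (fun n => (hfcont n).aestronglyMeasurable) (integrable_const 1)
        (fun n => Filter.Eventually.of_forall (hfbd n)) (Filter.Eventually.of_forall hflim)
    have hDI : Filter.Tendsto (fun n => ∫ x, f n x ∂μ01) Filter.atTop
        (𝓝 (∫ x, (Set.Ioi u).indicator (fun _ => (1:ℝ)) x ∂μ01)) := by
      refine tendsto_integral_of_dominated_convergence (fun _ => (1:ℝ))
        (fun n => (hfcont n).aestronglyMeasurable) (integrable_const 1)
        (fun n => Filter.Eventually.of_forall (hfbd n)) (Filter.Eventually.of_forall hflim)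
    have heq : ∀ n : ℕ, ∫ x in A, f n x ∂volume = 2⁻¹ * ∫ x, f n x ∂μ01 := by
      intro n
      have hu' : -3 ≤ u + ((n:ℝ)+1)⁻¹ := by linarith [(hinvpos n).le]
      have eA : ∫ x in A, f n x ∂volume = ((n:ℝ)+1) *
          ((∫ x in A, max (x-u) 0 ∂volume) - ∫ x in A, max (x - (u + ((n:ℝ)+1)⁻¹)) 0 ∂volume) := by
        rw [hfd]
        simp only
        rw [integral_const_mul _ _, integral_sub (hIAint u) (hIAint (u + ((n:ℝ)+1)⁻¹))]
      have eI : ∫ x, f n x ∂μ01 = ((n:ℝ)+1) *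
          ((∫ x, max (x-u) 0 ∂μ01) - ∫ x, max (x - (u + ((n:ℝ)+1)⁻¹)) 0 ∂μ01) := by
        rw [hfd]
        simp only
        rw [integral_const_mul _ _, integral_sub (hJint u) (hJint (u + ((n:ℝ)+1)⁻¹))]
      rw [eA, eI, hIAeq u hu, hIAeq (u + ((n:ℝ)+1)⁻¹) hu']
      ring
    have hDA' : Filter.Tendsto (fun n => 2⁻¹ * ∫ x, f n x ∂μ01) Filter.atTop
        (𝓝 (∫ x in A, (Set.Ioi u).indicator (fun _ => (1:ℝ)) x ∂volume)) := by
      refine hDA.congr (fun n => heq n)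
    have hlim2 : Filter.Tendsto (fun n => 2⁻¹ * ∫ x, f n x ∂μ01) Filter.atTop
        (𝓝 (2⁻¹ * ∫ x, (Set.Ioi u).indicator (fun _ => (1:ℝ)) x ∂μ01)) := hDI.const_mul _
    have hfinal := tendsto_nhds_unique hDA' hlim2
    have hAind : ∫ x in A, (Set.Ioi u).indicator (fun _ => (1:ℝ)) x ∂volume
        = (volume (A ∩ Set.Ioi u)).toReal := by
      rw [integral_indicator measurableSet_Ioi, setIntegral_const, measureReal_def,
        Measure.restrict_apply measurableSet_Ioi, Set.inter_comm, smul_eq_mul, mul_one]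
    have hIind : ∫ x, (Set.Ioi u).indicator (fun _ => (1:ℝ)) x ∂μ01
        = (volume (Set.Icc (0:ℝ) 1 ∩ Set.Ioi u)).toReal := by
      rw [integral_indicator measurableSet_Ioi, setIntegral_const, μ01, measureReal_def,
        Measure.restrict_apply measurableSet_Ioi, Set.inter_comm, smul_eq_mul, mul_one]
    rw [hAind, hIind] at hfinal
    have hfin2 : volume (Set.Icc (0:ℝ) 1 ∩ Set.Ioi u) ≠ ⊤ :=
      (lt_of_le_of_lt (measure_mono Set.inter_subset_left)
        (by rw [Real.volume_Icc]; norm_num)).ne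
    have hfin1 : volume (A ∩ Set.Ioi u) ≠ ⊤ :=
      (lt_of_le_of_lt (measure_mono (Set.inter_subset_left.trans hAsub))
        (by rw [Real.volume_Icc]; norm_num)).ne
    have hrhs : ((2⁻¹:ℝ≥0∞) * volume (Set.Icc (0:ℝ) 1 ∩ Set.Ioi u)).toReal
        = 2⁻¹ * (volume (Set.Icc (0:ℝ) 1 ∩ Set.Ioi u)).toReal := by
      rw [ENNReal.toReal_mul]
      norm_num
    refine (ENNReal.toReal_eq_toReal_iff' hfin1 (ENNReal.mul_ne_top (by norm_num) hfin2)).1 ?_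
    rw [hrhs, hfinal]
  have h1fin : volume (Set.Icc (0:ℝ) 1) = 1 := by rw [Real.volume_Icc]; norm_num
  have hsubIoi : Set.Icc (0:ℝ) 1 ⊆ Set.Ioi (-3) := fun x hx => by
    simp only [Set.mem_Ioi]
    linarith [hx.1]
  have hAvol : volume A = 2⁻¹ := by
    have h := hkey (-3) le_rfl
    rw [Set.inter_eq_left.2 (hAsub.trans hsubIoi), Set.inter_eq_left.2 hsubIoi, h1fin,
      mul_one] at h
    exact h
  have hmeq : volume.restrict A = (2⁻¹:ℝ≥0∞) • volume.restrict (Set.Icc (0:ℝ) 1) := by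
    refine Measure.ext_of_Ici _ _ (fun u => ?_)
    rw [Measure.restrict_apply measurableSet_Ici, Measure.smul_apply,
      Measure.restrict_apply measurableSet_Ici, smul_eq_mul]
    have hIci : ∀ s : Set ℝ, volume (Set.Ici u ∩ s) = volume (Set.Ioi u ∩ s) := by
      intro s
      refine measure_congr ?_
      exact MeasureTheory.ae_eq_set_inter Ioi_ae_eq_Ici.symm (by rfl)
    rw [Set.inter_comm (Set.Ici u) A, Set.inter_comm (Set.Ici u) (Set.Icc (0:ℝ) 1),
      Set.inter_comm A (Set.Ici u), Set.inter_comm (Set.Icc (0:ℝ) 1) (Set.Ici u),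
      hIci A, hIci (Set.Icc 0 1), Set.inter_comm (Set.Ioi u) A,
      Set.inter_comm (Set.Ioi u) (Set.Icc (0:ℝ) 1)]
    rcases le_or_gt (-3) u with hu | hu
    · exact hkey u hu
    · have e1 : A ∩ Set.Ioi u = A :=
        Set.inter_eq_left.2 (fun x hx => hu.trans (hsubIoi (hAsub hx)))
      have e2 : Set.Icc (0:ℝ) 1 ∩ Set.Ioi u = Set.Icc (0:ℝ) 1 :=
        Set.inter_eq_left.2 (fun x hx => hu.trans (hsubIoi hx))
      rw [e1, e2, hAvol, h1fin, mul_one]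
  have hc1 : (volume.restrict A) A = 2⁻¹ := by
    rw [Measure.restrict_apply hAm, Set.inter_self, hAvol]
  have hc2 : ((2⁻¹:ℝ≥0∞) • volume.restrict (Set.Icc (0:ℝ) 1)) A = 2⁻¹ * 2⁻¹ := by
    rw [Measure.smul_apply, Measure.restrict_apply hAm, Set.inter_eq_left.2 hAsub,
      hAvol, smul_eq_mul]
  rw [hmeq, hc2] at hc1
  have := congrArg ENNReal.toReal hc1
  rw [ENNReal.toReal_mul] at this
  norm_num at this


end Part1

/-- **Non-existence of a minimizer in a Monge problem with convex dominance.**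
Let `μ` be Lebesgue measure on `[0,1]`, `ν` the half-sum of the uniform probability
measures on `[0,1] × {−1}` and `[0,1] × {1}`, and `h(x,y) = (x − y₁)² + 1 − y₂²`.
Then the infimum of `∫₀¹ h(x, T(x)) dx` over Borel maps `T : [0,1] → ℝ²` with
`μ∘T⁻¹ ≼_c ν` equals `0` but is not attained: every admissible `T` has strictly positive
cost, while the maps `T_n` satisfy `μ∘T_n⁻¹ = ν` and `∫₀¹ h(x, T_n(x)) dx ≤ 1/2ⁿ`. -/
theorem monge_convexDom_infimum_not_attained :
    (∀ T : ℝ → ℝ × ℝ, Measurable T → ConvexDom (μ01.map T) νseg →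
      0 < ∫ x, hcost x (T x) ∂μ01) ∧
    (∀ n : ℕ, 1 ≤ n →
      Measurable (Tseq n) ∧
      μ01.map (Tseq n) = νseg ∧
      ∫ x, hcost x (Tseq n x) ∂μ01 ≤ 1 / 2 ^ n) := by
  constructor
  · exact fun T hT hCD => part1 hT hCD
  · exact fun n hn => ⟨measurable_Tseq n, map_Tseq n hn, cost_Tseq n hn⟩
end
end

section
/- There is no Lebesgue measurable set A ⊂ [0,1] such that ∫_A φ(y) dy = (1/2) ∫₀¹ φ(y) dy for every convex function φ : [0,1] → ℝ. (Indeed, such equalities would force the indicator of A to equal 1/2 almost everywhere, which is impossible.) -/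
open MeasureTheory Set
open scoped ENNReal

/-- **No measurable subset of `[0,1]` halves the integral of every convex function.**
There is no Lebesgue measurable set `A ⊆ [0,1]` such that
`∫_A φ(y) dy = (1/2) ∫₀¹ φ(y) dy` for every convex function `φ : [0,1] → ℝ`. -/
theorem no_measurable_set_halving_convex_integrals :
    ¬ ∃ A : Set ℝ, MeasurableSet A ∧ A ⊆ Set.Icc 0 1 ∧
      ∀ φ : ℝ → ℝ, ConvexOn ℝ (Set.Icc 0 1) φ →
        ∫ y in A, φ y = (1 / 2) * ∫ y in Set.Icc (0:ℝ) 1, φ y := by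
  rintro ⟨A, hAm, hA01, hint⟩
  have hAfin : volume A ≠ ⊤ := by
    refine ne_top_of_le_ne_top ?_ (measure_mono hA01)
    simp [Real.volume_Icc]
  -- Step 1: volume A = 1/2
  have hvol : (volume A).toReal = 1 / 2 := by
    have h1 := hint (fun _ => (1 : ℝ)) (convexOn_const 1 (convex_Icc 0 1))
    simp [Real.volume_Icc] at h1
    have h2 : volume.real A = (volume A).toReal := rfl; linarith
  -- integrability of continuous functions on A
  have hInt : ∀ f : ℝ → ℝ, Continuous f → IntegrableOn f A volume := fun f hf =>
    (hf.integrableOn_Icc (a := 0) (b := 1)).mono_set hA01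
  have hcont : ∀ c : ℝ, Continuous fun y : ℝ => max (y - c) 0 :=
    fun c => (continuous_id.sub continuous_const).max continuous_const
  -- convexity of the hinge functions
  have hconv : ∀ c : ℝ, ConvexOn ℝ (Icc (0:ℝ) 1) (fun y => max (y - c) 0) := by
    intro c
    have h1 : ConvexOn ℝ (Icc (0:ℝ) 1) (fun y : ℝ => y - c) :=
      (convexOn_id (convex_Icc 0 1)).sub (concaveOn_const c (convex_Icc 0 1))
    exact h1.sup (convexOn_const 0 (convex_Icc 0 1))
  -- value of ∫_{[0,1]} (y-c)⁺
  have hI : ∀ c ∈ Icc (0:ℝ) 1, ∫ y in Icc (0:ℝ) 1, max (y - c) 0 = (1 - c) ^ 2 / 2 := by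
    rintro c ⟨hc0, hc1⟩
    rw [integral_Icc_eq_integral_Ioc, ← intervalIntegral.integral_of_le zero_le_one,
      ← intervalIntegral.integral_add_adjacent_intervals (b := c)
        ((hcont c).intervalIntegrable 0 c) ((hcont c).intervalIntegrable c 1)]
    have e1 : ∫ y in (0:ℝ)..c, max (y - c) 0 = 0 := by
      rw [intervalIntegral.integral_congr (g := fun _ => (0:ℝ))]
      · simp
      · intro y hy
        rw [uIcc_of_le hc0] at hy
        exact max_eq_right (by linarith [hy.2])
    have e2 : ∫ y in c..(1:ℝ), max (y - c) 0 = (1 - c) ^ 2 / 2 := by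
      rw [intervalIntegral.integral_congr (g := fun y => y - c)]
      · rw [intervalIntegral.integral_comp_sub_right (fun x => x) c, integral_id]
        ring
      · intro y hy
        rw [uIcc_of_le hc1] at hy
        exact max_eq_left (by linarith [hy.1])
    rw [e1, e2]; ring
  -- value of F c := ∫_A (y-c)⁺
  have hF : ∀ c ∈ Icc (0:ℝ) 1, ∫ y in A, max (y - c) 0 = (1 - c) ^ 2 / 4 := by
    intro c hc
    rw [hint _ (hconv c), hI c hc]; ring
  set m : ℝ → ℝ := fun c => (volume (A ∩ Ici c)).toReal with hm
  -- key inequalities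
  have key : ∀ c c' : ℝ, 0 ≤ c → c < c' → c' ≤ 1 →
      m c' ≤ (2 - c - c') / 4 ∧ (2 - c - c') / 4 ≤ m c := by
    intro c c' hc0 hcc hc1
    set g : ℝ → ℝ := fun y => max (y - c) 0 - max (y - c') 0 with hgdef
    have hg : ∀ y : ℝ, 0 ≤ g y := fun y =>
      sub_nonneg.2 (max_le_max (by linarith) le_rfl)
    have hgle : ∀ y : ℝ, g y ≤ c' - c := by
      intro y
      have h1 : max (y - c) 0 ≤ max (y - c') 0 + (c' - c) :=
        max_le (by linarith [le_max_left (y - c') 0]) (by linarith [le_max_right (y - c') 0])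
      simp only [hgdef]; linarith
    have hgc : Continuous g := (hcont c).sub (hcont c')
    have hgi : IntegrableOn g A volume := hInt g hgc
    have hD : ∫ y in A, g y = (c' - c) * ((2 - c - c') / 4) := by
      rw [integral_sub (hInt _ (hcont c)) (hInt _ (hcont c')),
        hF c ⟨hc0, by linarith⟩, hF c' ⟨by linarith, hc1⟩]
      ring
    have hfin : ∀ s : Set ℝ, s ⊆ A → volume s < ⊤ :=
      fun s hs => lt_of_le_of_lt (measure_mono hs) hAfin.lt_top
    -- lower bound
    have low : (c' - c) * m c' ≤ ∫ y in A, g y := by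
      have h1 : ∫ y in A ∩ Ici c', g y ≤ ∫ y in A, g y :=
        setIntegral_mono_set hgi (Filter.Eventually.of_forall hg)
          (HasSubset.Subset.eventuallyLE inter_subset_left)
      have h2 : ∫ y in A ∩ Ici c', g y = (c' - c) * m c' := by
        rw [setIntegral_congr_fun (hAm.inter measurableSet_Ici)
          (g := fun _ => c' - c) ?_, setIntegral_const, smul_eq_mul, mul_comm]
        · rfl
        intro y hy
        have hy2 : c' ≤ y := hy.2
        simp only [hgdef]
        rw [max_eq_left (by linarith), max_eq_left (by linarith)]
        ring
      linarith
    -- upper bound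
    have hup : ∫ y in A, g y ≤ (c' - c) * m c := by
      have hptw : ∀ y ∈ A, g y ≤ (Ici c).indicator (fun _ => c' - c) y := by
        intro y _
        rcases le_or_gt c y with hy | hy
        · rw [indicator_of_mem (mem_Ici.2 hy)]
          exact hgle y
        · rw [indicator_of_notMem (by simpa using hy.not_ge)]
          have : g y = 0 := by
            simp only [hgdef]
            rw [max_eq_right (by linarith), max_eq_right (by linarith)]
            ring
          linarith
      have hindint : IntegrableOn ((Ici c).indicator (fun _ => c' - c)) A volume :=
        (integrableOn_const (hfin _ le_rfl).ne).indicator measurableSet_Ici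
      have h3 := setIntegral_mono_on hgi hindint hAm hptw
      rw [setIntegral_indicator measurableSet_Ici, setIntegral_const, smul_eq_mul,
        mul_comm] at h3
      exact h3
    have hcc' : (0:ℝ) < c' - c := by linarith
    constructor
    · have h4 : (c' - c) * m c' ≤ (c' - c) * ((2 - c - c') / 4) := by rw [← hD]; exact low
      exact le_of_mul_le_mul_left h4 hcc'
    · have h4 : (c' - c) * ((2 - c - c') / 4) ≤ (c' - c) * m c := by rw [← hD]; exact hup
      exact le_of_mul_le_mul_left h4 hcc'
  -- m c = (1-c)/2 on [0,1]
  have hmval : ∀ c ∈ Icc (0:ℝ) 1, m c = (1 - c) / 2 := by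
    rintro c ⟨hc0, hc1⟩
    have hle : m c ≤ (1 - c) / 2 := by
      rcases eq_or_lt_of_le hc0 with h0 | h0
      · have hA0 : A ∩ Ici (0:ℝ) = A := inter_eq_left.2 fun y hy => (hA01 hy).1
        rw [← h0]
        simp only [hm, hA0]
        rw [hvol]; norm_num
      · refine le_of_forall_pos_le_add fun ε hε => ?_
        have hc₀lt : max (c - ε) 0 < c := max_lt (by linarith) h0
        have h := (key (max (c - ε) 0) c (le_max_right _ _) hc₀lt hc1).1
        have h2 : c - ε ≤ max (c - ε) 0 := le_max_left _ _
        linarith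
    have hge : (1 - c) / 2 ≤ m c := by
      rcases eq_or_lt_of_le hc1 with h1 | h1
      · rw [h1, show (1 - (1:ℝ)) / 2 = 0 by norm_num]
        simp only [hm]
        positivity
      · refine le_of_forall_pos_le_add fun ε hε => ?_
        have hc' : c < min (c + ε) 1 := lt_min (by linarith) h1
        have h := (key c (min (c + ε) 1) hc0 hc' (min_le_right _ _)).2
        have h2 : min (c + ε) 1 ≤ c + ε := min_le_left _ _
        linarith
    linarith
  have hfin' : ∀ c : ℝ, volume (A ∩ Ici c) ≠ ⊤ :=
    fun c => ne_top_of_le_ne_top hAfin (measure_mono inter_subset_left)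
  have hmeas : ∀ c ∈ Icc (0:ℝ) 1, volume (A ∩ Ici c) = ENNReal.ofReal ((1 - c) / 2) := by
    intro c hc
    rw [← hmval c hc]
    exact (ENNReal.ofReal_toReal (hfin' c)).symm
  have hvolA : volume A = ENNReal.ofReal (1 / 2) := by
    rw [← hvol]
    exact (ENNReal.ofReal_toReal hAfin).symm
  -- measures agree
  have hmemA : IsFiniteMeasure (volume.restrict A) :=
    ⟨by rw [Measure.restrict_apply_univ]; exact hAfin.lt_top⟩
  have hext : volume.restrict A = (2⁻¹ : ℝ≥0∞) • volume.restrict (Icc 0 1) := by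
    refine Measure.ext_of_Iic _ _ fun a => ?_
    rw [Measure.restrict_apply measurableSet_Iic, Measure.smul_apply,
      Measure.restrict_apply measurableSet_Iic, smul_eq_mul]
    rcases lt_or_ge a 0 with ha | ha
    · have h1 : Iic a ∩ A = ∅ := by
        refine eq_empty_of_forall_notMem fun y hy => ?_
        have := (hA01 hy.2).1; have := mem_Iic.1 hy.1; linarith
      have h2 : Iic a ∩ Icc (0:ℝ) 1 = ∅ := by
        refine eq_empty_of_forall_notMem fun y hy => ?_
        have := hy.2.1; have := mem_Iic.1 hy.1; linarith
      simp [h1, h2]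
    rcases le_or_gt a 1 with ha1 | ha1
    · have hIoi : volume (A ∩ Ioi a) = ENNReal.ofReal ((1 - a) / 2) := by
        rw [← hmeas a ⟨ha, ha1⟩]
        refine le_antisymm (measure_mono (inter_subset_inter_right _ Ioi_subset_Ici_self)) ?_
        calc volume (A ∩ Ici a) ≤ volume ((A ∩ Ioi a) ∪ {a}) := by
              refine measure_mono fun y hy => ?_
              rcases eq_or_lt_of_le (mem_Ici.1 hy.2) with h | h
              · exact Or.inr (by simp [← h])
              · exact Or.inl ⟨hy.1, h⟩
          _ ≤ volume (A ∩ Ioi a) + volume {a} := measure_union_le _ _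
          _ = volume (A ∩ Ioi a) := by rw [Real.volume_singleton, add_zero]
      have hdisj2 : Disjoint (A ∩ Iic a) (A ∩ Ioi a) :=
        Disjoint.mono inter_subset_right inter_subset_right
          (Set.disjoint_left.2 fun y h1 h2 => absurd (mem_Iic.1 h1) (not_le.2 (mem_Ioi.1 h2)))
      have hsum : volume (Iic a ∩ A) + ENNReal.ofReal ((1 - a) / 2) = ENNReal.ofReal (1 / 2) := by
        rw [← hIoi, inter_comm, ← measure_union hdisj2 (hAm.inter measurableSet_Ioi), ← hvolA]
        rw [← inter_union_distrib_left, Iic_union_Ioi, inter_univ]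
      have hIic : volume (Iic a ∩ A) = ENNReal.ofReal (a / 2) := by
        rw [show (1:ℝ) / 2 = a / 2 + (1 - a) / 2 by ring,
          ENNReal.ofReal_add (by linarith) (by linarith)] at hsum
        exact WithTop.add_right_cancel ENNReal.ofReal_ne_top hsum
      have hIcc : Iic a ∩ Icc (0:ℝ) 1 = Icc 0 a := by
        ext y; simp only [mem_inter_iff, mem_Iic, mem_Icc]
        constructor
        · rintro ⟨h1, h2, h3⟩; exact ⟨h2, h1⟩
        · rintro ⟨h1, h2⟩; exact ⟨h2, h1, by linarith⟩
      rw [hIic, hIcc, Real.volume_Icc]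
      rw [show (2⁻¹ : ℝ≥0∞) = ENNReal.ofReal (1/2) by
        rw [show (1:ℝ)/2 = (2:ℝ)⁻¹ by norm_num]
        simp [ENNReal.ofReal_inv_of_pos]]
      rw [← ENNReal.ofReal_mul (by norm_num)]
      congr 1; ring
    · have h1 : Iic a ∩ A = A := inter_eq_right.2 fun y hy => le_trans (hA01 hy).2 ha1.le
      have h2 : Iic a ∩ Icc (0:ℝ) 1 = Icc 0 1 := inter_eq_right.2 fun y hy => le_trans hy.2 ha1.le
      rw [h1, h2, hvolA, Real.volume_Icc]
      rw [show (2⁻¹ : ℝ≥0∞) = ENNReal.ofReal (1/2) by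
        rw [show (1:ℝ)/2 = (2:ℝ)⁻¹ by norm_num]
        simp [ENNReal.ofReal_inv_of_pos]]
      norm_num
  -- evaluate at A for a contradiction
  have hAA := congrArg (fun μ : Measure ℝ => μ A) hext
  simp only [Measure.restrict_apply hAm, inter_self, Measure.smul_apply, smul_eq_mul] at hAA
  rw [inter_eq_left.2 hA01] at hAA
  have hne0 : volume A ≠ 0 := by
    rw [hvolA]; simp [ENNReal.ofReal_eq_zero]
  rw [← ENNReal.div_eq_inv_mul] at hAA
  exact (ENNReal.half_lt_self hne0 hAfin).ne hAA.symm
end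

section
/- Let Y be a Polish space, ζ a Borel probability measure on ℝ^d with finite first moment, ν a Borel probability measure on Y, and let F, F_n : Y → ℝ^d be Borel measurable functions with ∫_Y |F_n(y) − F(y)| ν(dy) → 0 as n → ∞. Suppose π_n ∈ Π(ζ,ν) are such that ∫_{ℝ^d×Y} φ(u) F_n(y) π_n(du dy) = ∫_{ℝ^d} φ(u) u ζ(du) for every bounded continuous φ : ℝ^d → ℝ (i.e. (u, F_n(y)) is a martingale with respect to π_n), and that π_n converges weakly to π ∈ Π(ζ,ν). Then ∫_{ℝ^d×Y} φ(u) F(y) π(du dy) = ∫_{ℝ^d} φ(u) u ζ(du) for every bounded continuous φ : ℝ^d → ℝ. -/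
open MeasureTheory Filter

noncomputable section

open BoundedContinuousFunction

lemma aux_abs_coord_le_norm {d : ℕ} (x : EuclideanSpace ℝ (Fin d)) (i : Fin d) :
    |x i| ≤ ‖x‖ := by
  rw [EuclideanSpace.norm_eq]
  calc |x i| = Real.sqrt (‖x i‖ ^ 2) := by
        rw [Real.sqrt_sq_eq_abs, abs_norm, Real.norm_eq_abs]
    _ ≤ Real.sqrt (∑ j, ‖x j‖ ^ 2) := by
        apply Real.sqrt_le_sqrt
        exact Finset.single_le_sum (f := fun j => ‖x j‖ ^ 2) (fun j _ => sq_nonneg _) (Finset.mem_univ i)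

lemma aux_tendsto_integral_bcf {X : Type*} [MeasurableSpace X] [TopologicalSpace X]
    [OpensMeasurableSpace X] {d : ℕ} {μs : ℕ → ProbabilityMeasure X} {μ : ProbabilityMeasure X}
    (h : Tendsto μs atTop (nhds μ)) (f : X →ᵇ EuclideanSpace ℝ (Fin d)) :
    Tendsto (fun n => ∫ x, f x ∂(μs n : Measure X)) atTop
      (nhds (∫ x, f x ∂(μ : Measure X))) := by
  have hco : ∀ (m : ProbabilityMeasure X) (i : Fin d),
      (∫ x, f x ∂(m : Measure X)) i = ∫ x, f x i ∂(m : Measure X) := by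
    intro m i
    have := (EuclideanSpace.proj (𝕜 := ℝ) i).integral_comp_comm (f.integrable (m : Measure X))
    simpa using this.symm
  have key : ∀ i : Fin d, Tendsto (fun n => ∫ x, f x i ∂(μs n : Measure X)) atTop
      (nhds (∫ x, f x i ∂(μ : Measure X))) := by
    intro i
    have hcont : Continuous (fun x => f x i) :=
      (EuclideanSpace.proj (𝕜 := ℝ) i).continuous.comp f.continuous
    have g : X →ᵇ ℝ := BoundedContinuousFunction.ofNormedAddCommGroup (fun x => f x i) hcont
      ‖f‖ (fun x => (aux_abs_coord_le_norm (f x) i).trans (f.norm_coe_le_norm x))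
    have := ProbabilityMeasure.tendsto_iff_forall_integral_tendsto.mp h
      (BoundedContinuousFunction.ofNormedAddCommGroup (fun x => f x i) hcont
        ‖f‖ (fun x => (aux_abs_coord_le_norm (f x) i).trans (f.norm_coe_le_norm x)))
    simpa using this
  have hpi : Tendsto (fun n => (WithLp.equiv 2 (Fin d → ℝ)) (∫ x, f x ∂(μs n : Measure X)))
      atTop (nhds ((WithLp.equiv 2 (Fin d → ℝ)) (∫ x, f x ∂(μ : Measure X)))) := by
    rw [tendsto_pi_nhds]
    intro i
    simpa [hco] using key i
  have hcont2 := (PiLp.continuousLinearEquiv 2 ℝ (fun _ : Fin d => ℝ)).symm.continuous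
  have := (hcont2.tendsto _).comp hpi
  simpa [PiLp.coe_symm_continuousLinearEquiv, Function.comp_def] using this

section Aux

variable {α β : Type*} [MeasurableSpace α] [MeasurableSpace β]
  {E : Type*} [NormedAddCommGroup E] [NormedSpace ℝ E]

lemma aux_integrable_snd {μ' : Measure (α × β)} {ν : Measure β}
    (hsnd : μ'.map Prod.snd = ν) {H : β → E} (hmeas : AEStronglyMeasurable H ν) :
    Integrable (fun q : α × β => H q.2) μ' ↔ Integrable H ν := by
  subst hsnd
  exact (integrable_map_measure hmeas measurable_snd.aemeasurable).symm

lemma aux_integral_snd {μ' : Measure (α × β)} {ν : Measure β}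
    (hsnd : μ'.map Prod.snd = ν) {H : β → E} (hmeas : AEStronglyMeasurable H ν) :
    ∫ q : α × β, H q.2 ∂μ' = ∫ y, H y ∂ν := by
  subst hsnd
  exact (integral_map measurable_snd.aemeasurable hmeas).symm

lemma aux_integrable_smul [TopologicalSpace α] [TopologicalSpace β]
    [OpensMeasurableSpace (α × β)]
    {μ' : Measure (α × β)}
    {φ : α → ℝ} (hφ : Continuous φ) {C : ℝ} (hC : ∀ u, |φ u| ≤ C)
    {H : α × β → E} (hH : Integrable H μ') :
    Integrable (fun q : α × β => φ q.1 • H q) μ' := by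
  refine (hH.norm.const_mul C).mono'
    (((hφ.comp continuous_fst).aestronglyMeasurable).smul hH.aestronglyMeasurable) ?_
  filter_upwards with q
  rw [norm_smul, Real.norm_eq_abs]
  exact mul_le_mul_of_nonneg_right (hC _) (norm_nonneg _)

lemma aux_diff_bound [TopologicalSpace α] [TopologicalSpace β] [Nonempty α]
    [OpensMeasurableSpace (α × β)]
    {μ' : Measure (α × β)} {ν : Measure β}
    (hsnd : μ'.map Prod.snd = ν)
    {φ : α → ℝ} (hφ : Continuous φ) {C : ℝ} (hC : ∀ u, |φ u| ≤ C)
    {H₁ H₂ : β → E} (hm1 : AEStronglyMeasurable H₁ ν) (hm2 : AEStronglyMeasurable H₂ ν)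
    (hi1 : Integrable H₁ ν) (hi2 : Integrable H₂ ν) :
    ‖(∫ q : α × β, φ q.1 • H₁ q.2 ∂μ') - ∫ q : α × β, φ q.1 • H₂ q.2 ∂μ'‖
      ≤ C * ∫ y, ‖H₁ y - H₂ y‖ ∂ν := by
  have hC0 : 0 ≤ C := (abs_nonneg _).trans (hC (Classical.arbitrary _))
  have hm1' : AEStronglyMeasurable (fun q : α × β => H₁ q.2) μ' := by
    rw [← hsnd] at hm1
    exact hm1.comp_aemeasurable measurable_snd.aemeasurable
  have hm2' : AEStronglyMeasurable (fun q : α × β => H₂ q.2) μ' := by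
    rw [← hsnd] at hm2
    exact hm2.comp_aemeasurable measurable_snd.aemeasurable
  have hi1' : Integrable (fun q : α × β => H₁ q.2) μ' := (aux_integrable_snd hsnd hm1).mpr hi1
  have hi2' : Integrable (fun q : α × β => H₂ q.2) μ' := (aux_integrable_snd hsnd hm2).mpr hi2
  have hs1 : Integrable (fun q : α × β => φ q.1 • H₁ q.2) μ' := aux_integrable_smul hφ hC hi1'
  have hs2 : Integrable (fun q : α × β => φ q.1 • H₂ q.2) μ' := aux_integrable_smul hφ hC hi2'
  rw [← integral_sub hs1 hs2]
  have hsub : Integrable (fun q : α × β => H₁ q.2 - H₂ q.2) μ' := hi1'.sub hi2'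
  calc ‖∫ q : α × β, (φ q.1 • H₁ q.2 - φ q.1 • H₂ q.2) ∂μ'‖
      ≤ ∫ q : α × β, ‖φ q.1 • H₁ q.2 - φ q.1 • H₂ q.2‖ ∂μ' := norm_integral_le_integral_norm _
    _ ≤ ∫ q : α × β, C * ‖H₁ q.2 - H₂ q.2‖ ∂μ' := by
        refine integral_mono (hs1.sub hs2).norm (hsub.norm.const_mul C) ?_
        intro q
        simp only [← smul_sub, norm_smul, Real.norm_eq_abs]
        exact mul_le_mul_of_nonneg_right (hC _) (norm_nonneg _)
    _ = C * ∫ q : α × β, ‖H₁ q.2 - H₂ q.2‖ ∂μ' := integral_const_mul C _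
    _ = C * ∫ y, ‖H₁ y - H₂ y‖ ∂ν := by
        congr 1
        exact aux_integral_snd hsnd (H := fun y => ‖H₁ y - H₂ y‖) ((hm1.sub hm2).norm)

end Aux


/-- **Stability of the martingale property under weak convergence of plans and `L¹`
perturbation of `F`.** Let `Y` be Polish, `ζ` a Borel probability measure on `ℝ^d` with
finite first moment, `ν` a Borel probability measure on `Y`, and `F, F_n : Y → ℝ^d` Borel
measurable with `∫ ‖F_n − F‖ dν → 0`. If `π_n ∈ Π(ζ,ν)` are such that
`∫ φ(u) F_n(y) π_n(du dy) = ∫ φ(u) u ζ(du)` for every bounded continuous `φ : ℝ^d → ℝ`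
(i.e. `(u, F_n(y))` is a martingale with respect to `π_n`), and `π_n → π ∈ Π(ζ,ν)`
weakly, then `∫ φ(u) F(y) π(du dy) = ∫ φ(u) u ζ(du)` for every bounded continuous `φ`. -/
theorem martingale_property_of_weak_limit
    {Y : Type*} [MeasurableSpace Y] [TopologicalSpace Y] [PolishSpace Y] [BorelSpace Y]
    {d : ℕ}
    (ζ : Measure (EuclideanSpace ℝ (Fin d))) [IsProbabilityMeasure ζ]
    (hζmom : Integrable (fun u => ‖u‖) ζ)
    (ν : Measure Y) [IsProbabilityMeasure ν]
    (F : Y → EuclideanSpace ℝ (Fin d)) (hFmeas : Measurable F)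
    (Fn : ℕ → Y → EuclideanSpace ℝ (Fin d)) (hFnmeas : ∀ n, Measurable (Fn n))
    (hFnint : ∀ n, Integrable (fun y => Fn n y - F y) ν)
    (hL1 : Tendsto (fun n => ∫ y, ‖Fn n y - F y‖ ∂ν) atTop (nhds 0))
    (πn : ℕ → ProbabilityMeasure (EuclideanSpace ℝ (Fin d) × Y))
    (hπnfst : ∀ n, (πn n : Measure (EuclideanSpace ℝ (Fin d) × Y)).map Prod.fst = ζ)
    (hπnsnd : ∀ n, (πn n : Measure (EuclideanSpace ℝ (Fin d) × Y)).map Prod.snd = ν)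
    (hmart : ∀ n, ∀ φ : EuclideanSpace ℝ (Fin d) → ℝ,
      Continuous φ → (∃ C : ℝ, ∀ u, |φ u| ≤ C) →
      ∫ q, φ q.1 • Fn n q.2 ∂(πn n : Measure (EuclideanSpace ℝ (Fin d) × Y)) =
        ∫ u, φ u • u ∂ζ)
    (π : ProbabilityMeasure (EuclideanSpace ℝ (Fin d) × Y))
    (hπfst : (π : Measure (EuclideanSpace ℝ (Fin d) × Y)).map Prod.fst = ζ)
    (hπsnd : (π : Measure (EuclideanSpace ℝ (Fin d) × Y)).map Prod.snd = ν)
    (hweak : Tendsto πn atTop (nhds π)) :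
    ∀ φ : EuclideanSpace ℝ (Fin d) → ℝ,
      Continuous φ → (∃ C : ℝ, ∀ u, |φ u| ≤ C) →
      ∫ q, φ q.1 • F q.2 ∂(π : Measure (EuclideanSpace ℝ (Fin d) × Y)) =
        ∫ u, φ u • u ∂ζ := by
  classical
  intro φ hφ hCe
  obtain ⟨C, hC⟩ := hCe
  have hC0 : 0 ≤ C := (abs_nonneg _).trans (hC 0)
  have hFm : AEStronglyMeasurable F ν := hFmeas.aestronglyMeasurable
  have hFnm : ∀ n, AEStronglyMeasurable (Fn n) ν := fun n => (hFnmeas n).aestronglyMeasurable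
  by_cases hFint : Integrable F ν
  · -- main case : F integrable
    have hFnint' : ∀ n, Integrable (Fn n) ν := by
      intro n
      have h : Integrable (fun y => (Fn n y - F y) + F y) ν := (hFnint n).add hFint
      have he : (fun y => (Fn n y - F y) + F y) = Fn n := funext fun y => sub_add_cancel _ _
      rwa [he] at h
    apply eq_of_forall_dist_le
    intro ε0 hε0
    letI := TopologicalSpace.upgradeIsCompletelyMetrizable Y
    set ε := ε0 / (2 * C + 1) with hεdef
    have h2C : (0 : ℝ) < 2 * C + 1 := by linarith
    have hε : 0 < ε := div_pos hε0 h2C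
    obtain ⟨G, hGa, hGint⟩ := hFint.exists_boundedContinuous_integral_sub_le hε
    have hGm : AEStronglyMeasurable (⇑G) ν := G.continuous.aestronglyMeasurable
    set T : (EuclideanSpace ℝ (Fin d) × Y) →ᵇ EuclideanSpace ℝ (Fin d) :=
      BoundedContinuousFunction.ofNormedAddCommGroup
      (fun q : EuclideanSpace ℝ (Fin d) × Y => φ q.1 • G q.2)
      ((hφ.comp continuous_fst).smul (G.continuous.comp continuous_snd))
      (C * ‖G‖)
      (fun q => by
        rw [norm_smul, Real.norm_eq_abs]
        exact mul_le_mul (hC _) (G.norm_coe_le_norm _) (norm_nonneg _) hC0) with hT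
    have hTcoe : ∀ m : Measure (EuclideanSpace ℝ (Fin d) × Y),
        ∫ q, T q ∂m = ∫ q : EuclideanSpace ℝ (Fin d) × Y, φ q.1 • G q.2 ∂m := by
      intro m
      apply integral_congr_ae
      filter_upwards with q
      simp [hT]
    set Rv := ∫ u : EuclideanSpace ℝ (Fin d), φ u • u ∂ζ with hRv
    have hband : ∀ n, ‖(∫ q, T q ∂(πn n : Measure (EuclideanSpace ℝ (Fin d) × Y))) - Rv‖
        ≤ C * (ε + ∫ y, ‖Fn n y - F y‖ ∂ν) := by
      intro n
      have hmrt := hmart n φ hφ ⟨C, hC⟩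
      have hdb := aux_diff_bound (μ' := (πn n : Measure (EuclideanSpace ℝ (Fin d) × Y)))
        (hπnsnd n) hφ hC hGm (hFnm n) hGint (hFnint' n)
      have htri : ∫ y, ‖G y - Fn n y‖ ∂ν
          ≤ (∫ y, ‖F y - G y‖ ∂ν) + ∫ y, ‖Fn n y - F y‖ ∂ν := by
        have iFG : Integrable (fun y => F y - G y) ν := hFint.sub hGint
        have iGFn : Integrable (fun y => G y - Fn n y) ν := hGint.sub (hFnint' n)
        have nFG : Integrable (fun y => ‖F y - G y‖) ν := iFG.norm
        have nFn : Integrable (fun y => ‖Fn n y - F y‖) ν := (hFnint n).norm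
        have nGFn : Integrable (fun y => ‖G y - Fn n y‖) ν := iGFn.norm
        rw [← integral_add nFG nFn]
        refine integral_mono nGFn (nFG.add nFn) ?_
        intro y
        have htr := dist_triangle (G y) (F y) (Fn n y)
        simp only [dist_eq_norm] at htr
        calc ‖G y - Fn n y‖ ≤ ‖G y - F y‖ + ‖F y - Fn n y‖ := htr
          _ = ‖F y - G y‖ + ‖Fn n y - F y‖ := by rw [norm_sub_rev (G y) (F y), norm_sub_rev (F y) (Fn n y)]
      calc ‖(∫ q, T q ∂(πn n : Measure (EuclideanSpace ℝ (Fin d) × Y))) - Rv‖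
          = ‖(∫ q : EuclideanSpace ℝ (Fin d) × Y, φ q.1 • G q.2
                ∂(πn n : Measure (EuclideanSpace ℝ (Fin d) × Y)))
              - ∫ q : EuclideanSpace ℝ (Fin d) × Y, φ q.1 • Fn n q.2
                ∂(πn n : Measure (EuclideanSpace ℝ (Fin d) × Y))‖ := by
            rw [hTcoe, hmrt]
        _ ≤ C * ∫ y, ‖G y - Fn n y‖ ∂ν := hdb
        _ ≤ C * (ε + ∫ y, ‖Fn n y - F y‖ ∂ν) := by
            apply mul_le_mul_of_nonneg_left _ hC0
            linarith [htri, hGa]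
    have htend := aux_tendsto_integral_bcf hweak T
    have hlimb : Tendsto (fun n => C * (ε + ∫ y, ‖Fn n y - F y‖ ∂ν)) atTop
        (nhds (C * (ε + 0))) := (tendsto_const_nhds.add hL1).const_mul C
    have hfinal1 : ‖(∫ q, T q ∂(π : Measure (EuclideanSpace ℝ (Fin d) × Y))) - Rv‖
        ≤ C * (ε + 0) :=
      le_of_tendsto_of_tendsto' ((htend.sub_const Rv).norm) hlimb hband
    have hfinal2 : ‖(∫ q : EuclideanSpace ℝ (Fin d) × Y, φ q.1 • F q.2
          ∂(π : Measure (EuclideanSpace ℝ (Fin d) × Y)))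
        - ∫ q, T q ∂(π : Measure (EuclideanSpace ℝ (Fin d) × Y))‖
        ≤ C * ∫ y, ‖F y - G y‖ ∂ν := by
      rw [hTcoe]
      exact aux_diff_bound (μ' := (π : Measure (EuclideanSpace ℝ (Fin d) × Y)))
        hπsnd hφ hC hFm hGm hFint hGint
    rw [dist_eq_norm]
    have htri2 := dist_triangle
      (∫ q : EuclideanSpace ℝ (Fin d) × Y, φ q.1 • F q.2
        ∂(π : Measure (EuclideanSpace ℝ (Fin d) × Y)))
      (∫ q, T q ∂(π : Measure (EuclideanSpace ℝ (Fin d) × Y))) Rv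
    simp only [dist_eq_norm] at htri2
    have hb2 : C * ∫ y, ‖F y - G y‖ ∂ν ≤ C * ε := mul_le_mul_of_nonneg_left hGa hC0
    have hεmul : ε * (2 * C + 1) = ε0 := div_mul_cancel₀ _ h2C.ne'
    nlinarith [htri2, hfinal1, hfinal2, hb2, hε.le]
  · -- degenerate case : F not integrable, then ζ-a.e. u = 0 and both sides vanish
    have hFn0 : ¬ Integrable (Fn 0) ν := by
      intro h
      apply hFint
      have h2 : Integrable (fun y => Fn 0 y - (Fn 0 y - F y)) ν := h.sub (hFnint 0)
      have he : (fun y => Fn 0 y - (Fn 0 y - F y)) = F := funext fun y => sub_sub_cancel _ _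
      rwa [he] at h2
    have key0 : ∀ ψ : EuclideanSpace ℝ (Fin d) → ℝ, Continuous ψ → (∀ u, |ψ u| ≤ 1 / 2) →
        ∫ u : EuclideanSpace ℝ (Fin d), (1 + ψ u) • u ∂ζ = 0 := by
      intro ψ hψc hψb
      have hmrt := hmart 0 (fun u => 1 + ψ u) (continuous_const.add hψc)
        ⟨3 / 2, fun u => by
          have h1 := abs_le.mp (hψb u)
          rw [abs_le]; constructor <;> linarith [h1.1, h1.2]⟩
      rw [← hmrt]
      refine integral_undef fun hint => hFn0 ?_
      have hm : AEStronglyMeasurable (fun q : EuclideanSpace ℝ (Fin d) × Y => Fn 0 q.2)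
          (πn 0 : Measure (EuclideanSpace ℝ (Fin d) × Y)) :=
        (Measurable.aestronglyMeasurable ((hFnmeas 0).comp measurable_snd))
      have hint2 : Integrable (fun q : EuclideanSpace ℝ (Fin d) × Y => Fn 0 q.2)
          (πn 0 : Measure (EuclideanSpace ℝ (Fin d) × Y)) := by
        refine (hint.norm.const_mul 2).mono' hm ?_
        filter_upwards with q
        have h1 := abs_le.mp (hψb q.1)
        have h2 : (1 : ℝ) / 2 ≤ |1 + ψ q.1| := by
          rw [abs_of_nonneg (by linarith [h1.1])]
          linarith [h1.1]
        rw [norm_smul, Real.norm_eq_abs]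
        nlinarith [norm_nonneg (Fn 0 q.2)]
      exact (aux_integrable_snd (hπnsnd 0) (hFnm 0)).mp hint2
    have hid : Integrable (fun u : EuclideanSpace ℝ (Fin d) => u) ζ :=
      ⟨aestronglyMeasurable_id,
        (hasFiniteIntegral_norm_iff (fun u : EuclideanSpace ℝ (Fin d) => u)).mp hζmom.2⟩
    have h1 : ∫ u : EuclideanSpace ℝ (Fin d), u ∂ζ = 0 := by
      have h := key0 (fun _ => 0) continuous_const (by norm_num)
      simpa using h
    have hbnd_int : ∀ χ : EuclideanSpace ℝ (Fin d) → ℝ, Continuous χ → (∀ u, |χ u| ≤ 1 / 2) →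
        Integrable (fun u : EuclideanSpace ℝ (Fin d) => χ u • u) ζ := by
      intro χ hχc hχb
      refine (hid.norm.const_mul (1 / 2)).mono'
        (hχc.aestronglyMeasurable.smul aestronglyMeasurable_id) ?_
      filter_upwards with u
      rw [norm_smul, Real.norm_eq_abs]
      exact mul_le_mul_of_nonneg_right (hχb u) (norm_nonneg _)
    have hχ : ∀ χ : EuclideanSpace ℝ (Fin d) → ℝ, Continuous χ → (∀ u, |χ u| ≤ 1 / 2) →
        ∫ u : EuclideanSpace ℝ (Fin d), χ u • u ∂ζ = 0 := by
      intro χ hχc hχb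
      have hkey : ∫ u : EuclideanSpace ℝ (Fin d), (u + χ u • u) ∂ζ = 0 := by
        have h := key0 χ hχc hχb
        have heq : ∀ u : EuclideanSpace ℝ (Fin d), (1 + χ u) • u = u + χ u • u := by
          intro u; rw [add_smul, one_smul]
        simp_rw [heq] at h
        exact h
      rw [integral_add hid (hbnd_int χ hχc hχb), h1, zero_add] at hkey
      exact hkey
    have hcoord : ∀ i : Fin d, ∀ᵐ u ∂ζ, u i = 0 := by
      intro i
      have hden : ∀ u : EuclideanSpace ℝ (Fin d), 0 < 1 + ‖u‖ := fun u => by positivity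
      set χ : EuclideanSpace ℝ (Fin d) → ℝ := fun u => 1 / 2 * (u i / (1 + ‖u‖)) with hχdef
      have hχc : Continuous χ := continuous_const.mul
        (((EuclideanSpace.proj (𝕜 := ℝ) i).continuous).div
          (continuous_const.add continuous_norm) (fun u => (hden u).ne'))
      have hratio : ∀ u : EuclideanSpace ℝ (Fin d), |u i| / (1 + ‖u‖) ≤ 1 := by
        intro u
        rw [div_le_one (hden u)]
        linarith [aux_abs_coord_le_norm u i, norm_nonneg u]
      have hχb : ∀ u, |χ u| ≤ 1 / 2 := by
        intro u
        have h1 : |u i / (1 + ‖u‖)| = |u i| / (1 + ‖u‖) := by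
          rw [abs_div, abs_of_pos (hden u)]
        have h2 : |u i / (1 + ‖u‖)| ≤ 1 := by rw [h1]; exact hratio u
        show |1 / 2 * (u i / (1 + ‖u‖))| ≤ 1 / 2
        rw [abs_mul, abs_of_nonneg (by norm_num : (0:ℝ) ≤ 1/2)]
        nlinarith [h2, abs_nonneg (u i / (1 + ‖u‖))]
      have h0 := hχ χ hχc hχb
      have hint : Integrable (fun u : EuclideanSpace ℝ (Fin d) => χ u * u i) ζ := by
        have h := (EuclideanSpace.proj (𝕜 := ℝ) i).integrable_comp (hbnd_int χ hχc hχb)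
        simpa using h
      have h0' : ∫ u : EuclideanSpace ℝ (Fin d), χ u * u i ∂ζ = 0 := by
        have hcc := (EuclideanSpace.proj (𝕜 := ℝ) i).integral_comp_comm (hbnd_int χ hχc hχb)
        rw [h0] at hcc
        simpa using hcc
      have hform : ∀ u : EuclideanSpace ℝ (Fin d),
          χ u * u i = 1 / 2 * (u i * u i / (1 + ‖u‖)) := by
        intro u
        show 1 / 2 * (u i / (1 + ‖u‖)) * u i = 1 / 2 * (u i * u i / (1 + ‖u‖))
        ring
      have hnn : ∀ u : EuclideanSpace ℝ (Fin d), 0 ≤ χ u * u i := by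
        intro u
        rw [hform u]
        have h3 : 0 ≤ u i * u i := mul_self_nonneg _
        have h4 := (hden u).le
        positivity
      have hae := (integral_eq_zero_iff_of_nonneg hnn hint).mp h0'
      filter_upwards [hae] with u hu
      by_contra hne
      have hsq : 0 < u i * u i := mul_self_pos.mpr hne
      have hpos : 0 < χ u * u i := by
        rw [hform u]
        have h5 := div_pos hsq (hden u)
        linarith
      simp only [Pi.zero_apply] at hu
      exact absurd hu hpos.ne'
    have hae0 : ∀ᵐ u ∂ζ, u = (0 : EuclideanSpace ℝ (Fin d)) := by
      have hall := ae_all_iff.mpr hcoord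
      filter_upwards [hall] with u hu
      exact (WithLp.equiv 2 (Fin d → ℝ)).injective (funext hu)
    have hrhs : ∫ u : EuclideanSpace ℝ (Fin d), φ u • u ∂ζ = 0 := by
      have h : ∫ u : EuclideanSpace ℝ (Fin d), φ u • u ∂ζ
          = ∫ _ : EuclideanSpace ℝ (Fin d), (0 : EuclideanSpace ℝ (Fin d)) ∂ζ := by
        apply integral_congr_ae
        filter_upwards [hae0] with u hu
        rw [hu, smul_zero]
      rw [h, integral_zero]
    have haefst : ∀ᵐ q ∂(π : Measure (EuclideanSpace ℝ (Fin d) × Y)),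
        q.1 = (0 : EuclideanSpace ℝ (Fin d)) := by
      have hζae : ∀ᵐ u ∂((π : Measure (EuclideanSpace ℝ (Fin d) × Y)).map Prod.fst),
          u = (0 : EuclideanSpace ℝ (Fin d)) := by rw [hπfst]; exact hae0
      exact (ae_map_iff measurable_fst.aemeasurable (measurableSet_eq)).mp hζae
    rw [hrhs]
    calc ∫ q, φ q.1 • F q.2 ∂(π : Measure (EuclideanSpace ℝ (Fin d) × Y))
        = ∫ q : EuclideanSpace ℝ (Fin d) × Y, φ 0 • F q.2
            ∂(π : Measure (EuclideanSpace ℝ (Fin d) × Y)) := by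
          apply integral_congr_ae
          filter_upwards [haefst] with q hq
          rw [hq]
      _ = φ 0 • ∫ q : EuclideanSpace ℝ (Fin d) × Y, F q.2
            ∂(π : Measure (EuclideanSpace ℝ (Fin d) × Y)) := integral_smul _ _
      _ = φ 0 • ∫ y, F y ∂ν := by rw [aux_integral_snd hπsnd hFm]
      _ = 0 := by rw [integral_undef hFint, smul_zero]
end
end
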